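/- arXiv:2512.24619 — 2 statements merged into one kernel-verified Lean document; each statement's English description precedes it below -/
import Mathlib

section
/- (External-to-swap regret reduction.) Let Σ be a finite set. Suppose at each round τ = 1,…,T a mixed strategy p_τ ∈ Δ(Σ) satisfies p_τ = p_τ·Q_τ (p_τ is a stationary distribution of the row-stochastic matrix Q_τ whose rows are q_{τ,σ} ∈ Δ(Σ)), and let U_τ : Σ → ℝ be the utility vector at round τ. Then the swap regret decomposes as: max_{φ:Σ→Σ} Σ_{τ=1}^T Σ_{σ∈Σ} p_τ(σ)·(U_τ(φ(σ)) − ⟨q_{τ,σ}, U_τ⟩) ≤ Σ_{σ∈Σ} max_{σ'∈Σ} Σ_{τ=1}^T (p_τ(σ)·U_τ(σ') − p_τ(σ)·⟨q_{τ,σ}, U_τ⟩). Moreover, since p_τ = p_τ·Q_τ implies ⟨p_τ, U_τ⟩ = Σ_σ p_τ(σ)·⟨q_{τ,σ}, U_τ⟩, the left-hand side equals the swap regret max_φ Σ_τ Σ_σ p_τ(σ)·(U_τ(φ(σ)) − U_τ applied via p_τ), i.e., max_φ Σ_τ (Σ_σ p_τ(σ)·U_τ(φ(σ)) − ⟨p_τ,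 U_τ⟩). -/
open Finset

/-- Blum–Mansour external-to-swap regret reduction: if each `p_τ` is a
stationary distribution of the row-stochastic matrix with rows `q_{τ,σ}`, then
the swap regret (equal, by stationarity, to
`max_φ Σ_τ (Σ_σ p_τ(σ) U_τ(φ σ) − ⟨p_τ, U_τ⟩)`) is bounded by the sum over
source strategies of per-row external regrets with scaled rewards. -/
theorem external_to_swap_reduction
    {S : Type*} [Fintype S] [DecidableEq S] [Nonempty S]
    (T : ℕ)
    (U : ℕ → S → ℝ)
    (p : ℕ → S → ℝ) (hp0 : ∀ τ σ, 0 ≤ p τ σ) (hp1 : ∀ τ, ∑ σ : S, p τ σ = 1)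
    (q : ℕ → S → S → ℝ) (hq0 : ∀ τ σ σ', 0 ≤ q τ σ σ')
    (hq1 : ∀ τ σ, ∑ σ' : S, q τ σ σ' = 1)
    (hstat : ∀ τ σ', p τ σ' = ∑ σ : S, p τ σ * q τ σ σ') :
    (Finset.univ.sup' Finset.univ_nonempty
        (fun φ : S → S => ∑ τ ∈ Finset.range T, ∑ σ : S,
          p τ σ * (U τ (φ σ) - ∑ ρ : S, q τ σ ρ * U τ ρ))
      ≤ ∑ σ : S, Finset.univ.sup' Finset.univ_nonempty
          (fun σ' : S => ∑ τ ∈ Finset.range T,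
            (p τ σ * U τ σ' - p τ σ * ∑ ρ : S, q τ σ ρ * U τ ρ))) ∧
    (Finset.univ.sup' Finset.univ_nonempty
        (fun φ : S → S => ∑ τ ∈ Finset.range T, ∑ σ : S,
          p τ σ * (U τ (φ σ) - ∑ ρ : S, q τ σ ρ * U τ ρ))
      = Finset.univ.sup' Finset.univ_nonempty
          (fun φ : S → S => ∑ τ ∈ Finset.range T,
            ((∑ σ : S, p τ σ * U τ (φ σ)) - ∑ σ : S, p τ σ * U τ σ))) := by
  constructor
  · apply Finset.sup'_le
    intro φ _
    have : (∑ τ ∈ Finset.range T, ∑ σ : S,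
        p τ σ * (U τ (φ σ) - ∑ ρ : S, q τ σ ρ * U τ ρ))
        = ∑ σ : S, ∑ τ ∈ Finset.range T,
          (p τ σ * U τ (φ σ) - p τ σ * ∑ ρ : S, q τ σ ρ * U τ ρ) := by
      rw [Finset.sum_comm]
      exact Finset.sum_congr rfl fun σ _ => Finset.sum_congr rfl fun τ _ => by ring
    rw [this]
    apply Finset.sum_le_sum
    intro σ _
    exact Finset.le_sup' (fun σ' : S => ∑ τ ∈ Finset.range T,
      (p τ σ * U τ σ' - p τ σ * ∑ ρ : S, q τ σ ρ * U τ ρ)) (Finset.mem_univ (φ σ))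
  · have h : ∀ φ : S → S, (∑ τ ∈ Finset.range T, ∑ σ : S,
          p τ σ * (U τ (φ σ) - ∑ ρ : S, q τ σ ρ * U τ ρ))
        = ∑ τ ∈ Finset.range T,
            ((∑ σ : S, p τ σ * U τ (φ σ)) - ∑ σ : S, p τ σ * U τ σ) := ?_
    · simp only [h]
    intro φ
    refine Finset.sum_congr rfl fun τ _ => ?_
    have key : ∑ σ : S, p τ σ * ∑ ρ : S, q τ σ ρ * U τ ρ = ∑ σ : S, p τ σ * U τ σ := by
      calc ∑ σ : S, p τ σ * ∑ ρ : S, q τ σ ρ * U τ ρ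
          = ∑ ρ : S, (∑ σ : S, p τ σ * q τ σ ρ) * U τ ρ := by
            simp only [Finset.mul_sum, Finset.sum_mul, mul_assoc]
            exact Finset.sum_comm
          _ = ∑ ρ : S, p τ ρ * U τ ρ := by
            refine Finset.sum_congr rfl fun ρ _ => ?_
            rw [← hstat]
    rw [← key]
    rw [← Finset.sum_sub_distrib]
    exact Finset.sum_congr rfl fun σ _ => by ring
end

section
/- Suppose for each source strategy σ in a finite set Σ of size N, the row-wise external regret satisfies max_{σ'} Σ_{τ=1}^T (v_{τ,σ}(σ') − ⟨q_{τ,σ}, v_{τ,σ}⟩) ≤ R, where v_{τ,σ}(σ') = p_τ(σ)·U_τ(σ') with p_τ ∈ Δ(Σ), U_τ : Σ → [0,1], and p_τ = p_τ·Q_τ (rows of Q_τ being q_{τ,σ}). Then the internal (swap) regret satisfies max_{φ:Σ→Σ} Σ_{τ=1}^T (Σ_σ p_τ(σ)·U_τ(φ(σ)) − ⟨p_τ, U_τ⟩) ≤ N·R. -/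
open Finset

/-- If every row's external regret (on the scaled rewards
`v_{τ,σ}(σ') = p_τ(σ)·U_τ(σ')`) is at most `R`, and each `p_τ` is a stationary
distribution of the row-stochastic matrix with rows `q_{τ,σ}`, then the swap
regret is at most `N·R`. -/
theorem swap_regret_le_card_mul_row_regret
    {S : Type*} [Fintype S]
    (T : ℕ) (R : ℝ)
    (U : ℕ → S → ℝ) (hU : ∀ τ σ, U τ σ ∈ Set.Icc (0 : ℝ) 1)
    (p : ℕ → S → ℝ) (hp0 : ∀ τ σ, 0 ≤ p τ σ) (hp1 : ∀ τ, ∑ σ : S, p τ σ = 1)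
    (q : ℕ → S → S → ℝ) (hq0 : ∀ τ σ σ', 0 ≤ q τ σ σ')
    (hq1 : ∀ τ σ, ∑ σ' : S, q τ σ σ' = 1)
    (hstat : ∀ τ σ', p τ σ' = ∑ σ : S, p τ σ * q τ σ σ')
    (hrow : ∀ σ σ' : S, ∑ τ ∈ Finset.range T,
      (p τ σ * U τ σ' - p τ σ * ∑ ρ : S, q τ σ ρ * U τ ρ) ≤ R) :
    ∀ φ : S → S, ∑ τ ∈ Finset.range T,
        ((∑ σ : S, p τ σ * U τ (φ σ)) - ∑ σ : S, p τ σ * U τ σ)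
      ≤ (Fintype.card S : ℝ) * R := by
  intro φ
  have key : ∀ τ, ∑ σ : S, p τ σ * U τ σ
      = ∑ σ : S, p τ σ * ∑ ρ : S, q τ σ ρ * U τ ρ := by
    intro τ
    calc ∑ σ : S, p τ σ * U τ σ
        = ∑ ρ : S, (∑ σ : S, p τ σ * q τ σ ρ) * U τ ρ := by
          refine Finset.sum_congr rfl fun ρ _ => ?_
          rw [← hstat]
      _ = ∑ σ : S, p τ σ * ∑ ρ : S, q τ σ ρ * U τ ρ := by
          simp_rw [Finset.sum_mul, Finset.mul_sum]
          rw [Finset.sum_comm]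
          simp [mul_assoc]
  have step : ∑ τ ∈ Finset.range T,
      ((∑ σ : S, p τ σ * U τ (φ σ)) - ∑ σ : S, p τ σ * U τ σ)
      = ∑ σ : S, ∑ τ ∈ Finset.range T,
        (p τ σ * U τ (φ σ) - p τ σ * ∑ ρ : S, q τ σ ρ * U τ ρ) := by
    rw [Finset.sum_comm]
    refine Finset.sum_congr rfl fun τ _ => ?_
    rw [key τ, ← Finset.sum_sub_distrib]
  rw [step]
  calc ∑ σ : S, ∑ τ ∈ Finset.range T,
        (p τ σ * U τ (φ σ) - p τ σ * ∑ ρ : S, q τ σ ρ * U τ ρ)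
      ≤ ∑ _σ : S, R := Finset.sum_le_sum fun σ _ => hrow σ (φ σ)
    _ = (Fintype.card S : ℝ) * R := by simp [mul_comm]
end
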